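/- arXiv:1311.1973 — 5 statements merged into one kernel-verified Lean document; each statement's English description precedes it below -/
import Mathlib

section
/- Let α, β, λ, μ, ν be real numbers with β ≠ 0, and let M be the symmetric matrix M = !![α, β, 0; β, λ, μ; 0, μ, ν] in Matrix (Fin 3) (Fin 3) ℝ. If μ = 0 and ν² − (α + λ)ν + (αλ − β²) = 0, then M has exactly two distinct real eigenvalues, i.e. the set spectrum ℝ M has exactly two elements. -/
/-- The 'if' direction of the algebraic content of Proposition 4.1:
if `μ = 0` and `ν² − (α+λ)ν + (αλ − β²) = 0`, the shape-operator matrix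
`!![α, β, 0; β, λ, μ; 0, μ, ν]` with `β ≠ 0` has exactly two distinct real eigenvalues. -/
theorem stmt0 (α β l μ ν : ℝ) (hβ : β ≠ 0) (hμ : μ = 0)
    (hν : ν ^ 2 - (α + l) * ν + (α * l - β ^ 2) = 0) :
    (spectrum ℝ (!![α, β, 0; β, l, μ; 0, μ, ν] : Matrix (Fin 3) (Fin 3) ℝ)).ncard = 2 := by
  subst hμ
  set σ : ℝ := α + l - ν with hσ
  have hdet : ∀ x : ℝ, (algebraMap ℝ (Matrix (Fin 3) (Fin 3) ℝ) x - !![α, β, 0; β, l, 0; 0, 0, ν]).det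
      = (x - ν) ^ 2 * (x - σ) := by
    intro x
    rw [Matrix.algebraMap_eq_diagonal]
    rw [Matrix.det_fin_three]
    simp [Matrix.diagonal, Matrix.sub_apply]
    linear_combination (x - ν) * hν
  have hspec : spectrum ℝ (!![α, β, 0; β, l, 0; 0, 0, ν] : Matrix (Fin 3) (Fin 3) ℝ) = {ν, σ} := by
    ext x
    rw [spectrum.mem_iff, Matrix.isUnit_iff_isUnit_det, isUnit_iff_ne_zero, not_not, hdet x]
    simp only [Set.mem_insert_iff, Set.mem_singleton_iff]
    constructor
    · intro h
      rcases mul_eq_zero.1 h with h | h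
      · left; have := pow_eq_zero_iff (n := 2) (by norm_num) |>.1 h; linarith
      · right; linarith
    · rintro (rfl | rfl) <;> simp
  rw [hspec]
  have hne : ν ≠ σ := by
    intro h
    have : (2 * ν - (α + l)) ^ 2 = (α - l) ^ 2 + 4 * β ^ 2 := by nlinarith
    have hb2 : 0 < β ^ 2 := by positivity
    nlinarith [sq_nonneg (α - l), sq_nonneg (2*ν - (α+l))]
  rw [Set.ncard_pair hne]
end

section
/- Let α, β, λ, μ, ν be real numbers with β ≠ 0, and let M be the symmetric matrix M = !![α, β, 0; β, λ, μ; 0, μ, ν] in Matrix (Fin 3) (Fin 3) ℝ. If M has at most two distinct real eigenvalues (i.e. the set spectrum ℝ M has at most two elements), then μ = 0 and ν² − (α + λ)ν + (αλ − β²) = 0. -/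
/-- The 'only if' direction of the algebraic content of Proposition 4.1:
if the shape-operator matrix `!![α, β, 0; β, l, μ; 0, μ, ν]` with `β ≠ 0` has at most two
distinct real eigenvalues, then `μ = 0` and `ν² − (α+λ)ν + (αλ − β²) = 0`. -/
theorem stmt1 (α β l μ ν : ℝ) (hβ : β ≠ 0)
    (h2 : ∃ a b : ℝ,
      spectrum ℝ (!![α, β, 0; β, l, μ; 0, μ, ν] : Matrix (Fin 3) (Fin 3) ℝ) ⊆ {a, b}) :
    μ = 0 ∧ ν ^ 2 - (α + l) * ν + (α * l - β ^ 2) = 0 := by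
  obtain ⟨a, b, hab⟩ := h2
  set M : Matrix (Fin 3) (Fin 3) ℝ := !![α, β, 0; β, l, μ; 0, μ, ν] with hMdef
  have hM : M.IsHermitian := by
    unfold Matrix.IsHermitian
    ext i j
    fin_cases i <;> fin_cases j <;> simp [hMdef, Matrix.conjTranspose_apply]
  set U : Matrix (Fin 3) (Fin 3) ℝ := (hM.eigenvectorUnitary : Matrix (Fin 3) (Fin 3) ℝ) with hU
  set D : Matrix (Fin 3) (Fin 3) ℝ :=
    Matrix.diagonal (RCLike.ofReal ∘ hM.eigenvalues) with hD
  have hspec : M = U * D * star U := hM.spectral_theorem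
  have hUV : U * star U = 1 := (Matrix.mem_unitaryGroup_iff).mp hM.eigenvectorUnitary.2
  have hVU : star U * U = 1 := (Matrix.mem_unitaryGroup_iff').mp hM.eigenvectorUnitary.2
  have hDq : D * D - (a + b) • D + (a * b) • 1 = 0 := by
    ext i j
    rcases eq_or_ne i j with rfl | hij
    · have hmem : hM.eigenvalues i ∈ ({a, b} : Set ℝ) :=
        hab (hM.eigenvalues_mem_spectrum_real i)
      simp only [hD, Matrix.diagonal_mul_diagonal, Matrix.add_apply, Matrix.sub_apply,
        Matrix.smul_apply, Matrix.diagonal_apply_eq, Matrix.one_apply_eq, Function.comp_apply,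
        Matrix.zero_apply, smul_eq_mul, mul_one]
      obtain h | h : hM.eigenvalues i = a ∨ hM.eigenvalues i = b := hmem <;>
        rw [show (RCLike.ofReal (hM.eigenvalues i) : ℝ) = hM.eigenvalues i from rfl, h] <;> ring
    · simp [hD, Matrix.diagonal_apply_ne _ hij, Matrix.one_apply_ne hij]
  have h1 : M * M = U * (D * D) * star U := by
    rw [hspec]
    simp only [Matrix.mul_assoc]
    rw [← Matrix.mul_assoc (star U) U (D * star U), hVU, Matrix.one_mul]
  have hN : M * M - (a + b) • M + (a * b) • 1 = 0 := by
    have expand : M * M - (a + b) • M + (a * b) • (1 : Matrix (Fin 3) (Fin 3) ℝ)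
        = U * (D * D - (a + b) • D + (a * b) • 1) * star U := by
      rw [h1, hspec]
      simp only [mul_sub, sub_mul, mul_add, add_mul, mul_smul_comm, smul_mul_assoc,
        Matrix.mul_one, hUV, Matrix.mul_assoc]
    rw [expand, hDq]
    simp
  have e : ∀ i j, (M * M - (a + b) • M + (a * b) • (1 : Matrix (Fin 3) (Fin 3) ℝ)) i j = 0 :=
    fun i j => congrFun (congrFun hN i) j
  have e00 := e 0 0
  have e01 := e 0 1
  have e02 := e 0 2
  have e22 := e 2 2
  simp [hMdef, Matrix.mul_apply, Fin.sum_univ_three, Matrix.one_apply, Matrix.smul_apply,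
    Matrix.sub_apply, Matrix.add_apply] at e00 e01 e02 e22
  have hμ : μ = 0 := by
    rcases e02 with h | h
    · exact absurd h hβ
    · exact h
  have hsum : a + b = α + l := by
    have hz : β * (α + l - (a + b)) = 0 := by ring_nf; linarith [e01]
    rcases mul_eq_zero.mp hz with h | h
    · exact absurd h hβ
    · linarith
  have hprod : a * b = α * l - β ^ 2 := by linear_combination e00 + α * hsum
  exact ⟨hμ, by linear_combination e22 + ν * hsum - hprod - μ * hμ⟩
end

section
/- Let c ∈ ℝ and let α₀, β₀, λ₀ be real numbers with β₀ ≠ 0. Then there exist ε > 0 and functions α, β, λ, ν : ℝ → ℝ with α(0) = α₀, β(0) = β₀, λ(0) = λ₀, such that for every s in the open interval Ioo (−ε) ε: β(s) ≠ 0, the constraint (ν(s) − α(s))(ν(s) − λ(s)) = β(s)² holds, and the derivatives satisfy HasDerivAt α (β(s)·(α(s) + λ(s) − 3ν(s))) s, HasDerivAt β (β(s)² + λ(s)² + ν(s)·(α(s) − 2λ(s)) + c) s, and HasDerivAt λ ((λ(s) − ν(s))·(λ(s)² − α(s)λ(s) − c)/β(s) + β(s)·(2λ(s) + ν(s))) s.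 -/
open Set


noncomputable def Fnu (p : ℝ × ℝ × ℝ) : ℝ :=
  ((p.1 + p.2.2) + Real.sqrt ((p.1 - p.2.2) ^ 2 + 4 * p.2.1 ^ 2)) / 2

noncomputable def vfield (c : ℝ) (p : ℝ × ℝ × ℝ) : ℝ × ℝ × ℝ :=
  (p.2.1 * (p.1 + p.2.2 - 3 * Fnu p),
   p.2.1 ^ 2 + p.2.2 ^ 2 + Fnu p * (p.1 - 2 * p.2.2) + c,
   (p.2.2 - Fnu p) * (p.2.2 ^ 2 - p.1 * p.2.2 - c) / p.2.1 + p.2.1 * (2 * p.2.2 + Fnu p))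

lemma Fnu_contDiffAt {p : ℝ × ℝ × ℝ} (hβ : p.2.1 ≠ 0) : ContDiffAt ℝ 1 Fnu p := by
  have h : ((p.1 - p.2.2) ^ 2 + 4 * p.2.1 ^ 2) ≠ 0 := by positivity
  have h1 : ContDiffAt ℝ 1 (fun q : ℝ × ℝ × ℝ => (q.1 - q.2.2) ^ 2 + 4 * q.2.1 ^ 2) p := by
    fun_prop
  have h2 := (Real.contDiffAt_sqrt h).comp p h1
  unfold Fnu
  fun_prop (disch := first | assumption | norm_num)

lemma vfield_contDiffAt (c : ℝ) {p : ℝ × ℝ × ℝ} (hβ : p.2.1 ≠ 0) :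
    ContDiffAt ℝ 1 (vfield c) p := by
  have hF := Fnu_contDiffAt hβ
  unfold vfield
  fun_prop (disch := first | assumption | norm_num)

/-- Local existence of solutions of the ODE system (4.3) satisfying the algebraic
constraint `(ν − α)(ν − λ) = β²`, for any initial data with `β₀ ≠ 0`. -/
theorem stmt6 (c α₀ β₀ l₀ : ℝ) (hβ₀ : β₀ ≠ 0) :
    ∃ (ε : ℝ), 0 < ε ∧ ∃ (α β l ν : ℝ → ℝ),
      α 0 = α₀ ∧ β 0 = β₀ ∧ l 0 = l₀ ∧
      ∀ s ∈ Ioo (-ε) ε,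
        β s ≠ 0 ∧
        (ν s - α s) * (ν s - l s) = (β s) ^ 2 ∧
        HasDerivAt α (β s * (α s + l s - 3 * ν s)) s ∧
        HasDerivAt β ((β s) ^ 2 + (l s) ^ 2 + ν s * (α s - 2 * l s) + c) s ∧
        HasDerivAt l
          ((l s - ν s) * ((l s) ^ 2 - α s * l s - c) / β s + β s * (2 * l s + ν s)) s := by
  have hv : ContDiffAt ℝ 1 (vfield c) (α₀, β₀, l₀) := vfield_contDiffAt c hβ₀
  obtain ⟨f, hf0, ε, hε, hf⟩ := hv.exists_forall_mem_closedBall_exists_eq_forall_mem_Ioo_hasDerivAt₀ (0 : ℝ)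
  simp only [zero_sub, zero_add] at hf
  -- continuity of β at 0
  have h0 : (0 : ℝ) ∈ Ioo (-ε) ε := by constructor <;> simp [hε]
  have hcont : ContinuousAt (fun s => (f s).2.1) 0 :=
    (continuous_fst.comp continuous_snd).continuousAt.comp (hf 0 h0).differentiableAt.continuousAt
  have hne : ∀ᶠ s in nhds (0 : ℝ), (f s).2.1 ≠ 0 := by
    have : (f 0).2.1 ≠ 0 := by rw [hf0]; exact hβ₀
    exact hcont.eventually_ne this
  obtain ⟨δ, hδ, hδne⟩ := Metric.eventually_nhds_iff.mp hne
  refine ⟨min ε δ, lt_min hε hδ, fun s => (f s).1, fun s => (f s).2.1, fun s => (f s).2.2,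
    fun s => Fnu (f s), by simp [hf0], by simp [hf0], by simp [hf0], fun s hs => ?_⟩
  have hsε : s ∈ Ioo (-ε) ε :=
    ⟨lt_of_le_of_lt (neg_le_neg (min_le_left ε δ)) hs.1, lt_of_lt_of_le hs.2 (min_le_left ε δ)⟩
  have hsδ : dist s (0 : ℝ) < δ := by
    rw [Real.dist_eq, sub_zero, abs_lt]
    exact ⟨lt_of_le_of_lt (neg_le_neg (min_le_right ε δ)) hs.1,
      lt_of_lt_of_le hs.2 (min_le_right ε δ)⟩
  have hβs : (f s).2.1 ≠ 0 := hδne hsδ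
  have hd := hf s hsε
  have hD : (0 : ℝ) ≤ ((f s).1 - (f s).2.2) ^ 2 + 4 * (f s).2.1 ^ 2 := by positivity
  have hsq := Real.sq_sqrt hD
  refine ⟨hβs, ?_, ?_, ?_, ?_⟩
  · unfold Fnu; nlinarith [hsq]
  · have h1 := (hd.hasFDerivAt.fst).hasDerivAt
    simpa [vfield] using h1
  · have h1 := ((hd.hasFDerivAt.snd).fst).hasDerivAt
    simpa [vfield] using h1
  · have h1 := ((hd.hasFDerivAt.snd).snd).hasDerivAt
    simpa [vfield] using h1
end

section
/- Let c ∈ ℝ, let I ⊂ ℝ be an open interval, and let α, β, λ, ν : ℝ → ℝ be functions such that for all s ∈ I: β(s) ≠ 0, the constraint (ν(s) − α(s))(ν(s) − λ(s)) = β(s)² holds, HasDerivAt α (β(s)·(α(s) + λ(s) − 3ν(s))) s, HasDerivAt β (β(s)² + λ(s)² + ν(s)·(α(s) − 2λ(s)) + c) s, HasDerivAt λ ((λ(s) − ν(s))·(λ(s)² − α(s)λ(s) − c)/β(s) + β(s)·(2λ(s) + ν(s))) s, and ν is differentiable at s. Then for all s ∈ I, the derivative of ν at s equals 3·c·β(s)·(ν(s)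 − α(s)) / (β(s)² + (ν(s) − α(s))²). -/
open Set

/-- Along a solution of the ODE system (4.3) satisfying the constraint
`(ν − α)(ν − λ) = β²` with `β` nonvanishing, the derivative of `ν` is
`3cβ(ν − α)/(β² + (ν − α)²)` (equation (5.9), i.e. `dν/ds = 3cτ/(1 + τ²)`). -/
theorem stmt8 (c : ℝ) (I : Set ℝ) (hI : IsOpen I) (hI' : I.OrdConnected)
    (α β l ν : ℝ → ℝ)
    (h : ∀ s ∈ I, β s ≠ 0 ∧
      (ν s - α s) * (ν s - l s) = (β s) ^ 2 ∧
      HasDerivAt α (β s * (α s + l s - 3 * ν s)) s ∧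
      HasDerivAt β ((β s) ^ 2 + (l s) ^ 2 + ν s * (α s - 2 * l s) + c) s ∧
      HasDerivAt l
        ((l s - ν s) * ((l s) ^ 2 - α s * l s - c) / β s + β s * (2 * l s + ν s)) s ∧
      DifferentiableAt ℝ ν s) :
    ∀ s ∈ I, deriv ν s = 3 * c * β s * (ν s - α s) / ((β s) ^ 2 + (ν s - α s) ^ 2) := by
  intro s hs
  obtain ⟨hβ, hK, hα, hβd, hld, hν⟩ := h s hs
  have hνd : HasDerivAt ν (deriv ν s) s := hν.hasDerivAt
  -- derivative of the constraint function
  have hF : HasDerivAt (fun t => (ν t - α t) * (ν t - l t) - (β t) ^ 2)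
      (((deriv ν s - β s * (α s + l s - 3 * ν s)) * (ν s - l s)
        + (ν s - α s) * (deriv ν s -
          ((l s - ν s) * ((l s) ^ 2 - α s * l s - c) / β s + β s * (2 * l s + ν s))))
       - (2 : ℕ) * (β s) ^ 1 * ((β s) ^ 2 + (l s) ^ 2 + ν s * (α s - 2 * l s) + c)) s :=
    ((hνd.sub hα).mul (hνd.sub hld)).sub (hβd.pow 2)
  have heq : (fun t => (ν t - α t) * (ν t - l t) - (β t) ^ 2) =ᶠ[nhds s]
      (fun _ => (0 : ℝ)) := by
    filter_upwards [hI.mem_nhds hs] with t ht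
    have := (h t ht).2.1
    simp [this]
  have hF0 : HasDerivAt (fun t => (ν t - α t) * (ν t - l t) - (β t) ^ 2) 0 s :=
    (hasDerivAt_const s 0).congr_of_eventuallyEq heq
  have hD := hF.unique hF0
  -- 2ν − α − λ ≠ 0
  have hβsq : 0 < (β s) ^ 2 := by positivity
  have hsum : 2 * ν s - α s - l s ≠ 0 := by
    intro h0
    have hνl : ν s - l s = -(ν s - α s) := by linarith
    rw [hνl] at hK
    nlinarith [sq_nonneg (ν s - α s)]
  -- clear the division by β in hD
  have hD2 : deriv ν s * (2 * ν s - α s - l s) * β s =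
      β s * (α s + l s - 3 * ν s) * (ν s - l s) * β s
      + ((l s - ν s) * ((l s) ^ 2 - α s * l s - c) + β s * (2 * l s + ν s) * β s)
        * (ν s - α s)
      + 2 * (β s) ^ 2 * ((β s) ^ 2 + (l s) ^ 2 + ν s * (α s - 2 * l s) + c) := by
    field_simp at hD
    linear_combination hD
  set a := α s
  set b := β s
  set L := l s
  set n := ν s
  have key : deriv ν s * ((b) ^ 2 + (n - a) ^ 2) * ((2 * n - a - L) * b) =
      3 * c * b * (n - a) * ((2 * n - a - L) * b) := by
    linear_combination (b ^ 2 + (n - a) ^ 2) * hD2 +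
      (c * n ^ 2 - L ^ 2 * n ^ 2 - 2 * b ^ 2 * c - 2 * b ^ 2 * n ^ 2 - b ^ 2 * L ^ 2
        - 2 * b ^ 4 - 2 * a * c * n + a * L * n ^ 2 + 2 * a * L ^ 2 * n
        + 4 * a * b ^ 2 * n + a * b ^ 2 * L + a ^ 2 * c - 2 * a ^ 2 * L * n
        - a ^ 2 * L ^ 2 - 2 * a ^ 2 * b ^ 2 + a ^ 3 * L) * hK
  have hden : (b) ^ 2 + (n - a) ^ 2 ≠ 0 := by positivity
  rw [eq_div_iff hden]
  exact mul_right_cancel₀ (mul_ne_zero hsum hβ) key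
end

section
/- Let c ∈ ℝ, let I ⊂ ℝ be an open interval, and let α, β, λ, ν : ℝ → ℝ be functions such that for all s ∈ I: β(s) ≠ 0, (ν(s) − α(s))(ν(s) − λ(s)) = β(s)², HasDerivAt α (β(s)·(α(s) + λ(s) − 3ν(s))) s, HasDerivAt β (β(s)² + λ(s)² + ν(s)·(α(s) − 2λ(s)) + c) s, HasDerivAt λ ((λ(s) − ν(s))·(λ(s)² − α(s)λ(s) − c)/β(s) + β(s)·(2λ(s) + ν(s))) s, and ν is differentiable at s. Define τ : ℝ → ℝ by τ(s) = (ν(s) − α(s))/β(s). Then for all s ∈ I, τ is differentiable at s with derivative ν(s)·(1 + τ(s)²) + c·τ(s)·(2 − τ(s)²)/(β(s)·(1 + τ(s)²)). -/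
open Set

set_option maxHeartbeats 1000000 in
private theorem stmt9_key (t q n c d : ℝ) (hq : q ≠ 0) (ht : t ≠ 0)
    (E : (d - (q*t) * ((n - q*t^2) + (n - q) - 3 * n)) * (n - (n - q))
        + (n - (n - q*t^2)) * (d - (((n - q) - n) * ((n - q) ^ 2 - (n - q*t^2) * (n - q) - c) / (q*t) + (q*t) * (2 * (n - q) + n)))
        - 2 * (q*t) * ((q*t) ^ 2 + (n - q) ^ 2 + n * ((n - q*t^2) - 2 * (n - q)) + c) = 0) :
    n * (1 + t ^ 2) + c * t * (2 - t ^ 2) / ((q*t) * (1 + t ^ 2))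
    = ((d - (q*t) * ((n - q*t^2) + (n - q) - 3 * n)) * (q*t)
       - (n - (n - q*t^2)) * ((q*t) ^ 2 + (n - q) ^ 2 + n * ((n - q*t^2) - 2 * (n - q)) + c)) / (q*t) ^ 2 := by
  have h1 : (1 : ℝ) + t ^ 2 ≠ 0 := by positivity
  field_simp at E ⊢
  apply mul_left_cancel₀ hq
  linear_combination (-1) * E

private theorem stmt9_key' (t q a b L n c d : ℝ) (hq : q ≠ 0) (ht : t ≠ 0)
    (hb : b = q * t) (ha : a = n - q * t ^ 2) (hL : L = n - q)
    (E : (d - b * (a + L - 3 * n)) * (n - L)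
        + (n - a) * (d - ((L - n) * (L ^ 2 - a * L - c) / b + b * (2 * L + n)))
        - 2 * b * (b ^ 2 + L ^ 2 + n * (a - 2 * L) + c) = 0) :
    n * (1 + t ^ 2) + c * t * (2 - t ^ 2) / (b * (1 + t ^ 2))
    = ((d - b * (a + L - 3 * n)) * b
       - (n - a) * (b ^ 2 + L ^ 2 + n * (a - 2 * L) + c)) / b ^ 2 := by
  subst hb ha hL
  exact stmt9_key t q n c d hq ht E

/-- Along a solution of the ODE system (4.3) satisfying the constraint
`(ν − α)(ν − λ) = β²` with `β` nonvanishing, the quantity `τ = (ν − α)/β` is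
differentiable with derivative `ν(1 + τ²) + cτ(2 − τ²)/(β(1 + τ²))`
(equation (5.10) of the paper). -/
theorem stmt9 (c : ℝ) (I : Set ℝ) (hI : IsOpen I) (hI' : I.OrdConnected)
    (α β l ν : ℝ → ℝ)
    (h : ∀ s ∈ I, β s ≠ 0 ∧
      (ν s - α s) * (ν s - l s) = (β s) ^ 2 ∧
      HasDerivAt α (β s * (α s + l s - 3 * ν s)) s ∧
      HasDerivAt β ((β s) ^ 2 + (l s) ^ 2 + ν s * (α s - 2 * l s) + c) s ∧
      HasDerivAt l
        ((l s - ν s) * ((l s) ^ 2 - α s * l s - c) / β s + β s * (2 * l s + ν s)) s ∧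
      DifferentiableAt ℝ ν s)
    (τ : ℝ → ℝ) (hτ : ∀ s, τ s = (ν s - α s) / β s) :
    ∀ s ∈ I, HasDerivAt τ
      (ν s * (1 + (τ s) ^ 2) + c * τ s * (2 - (τ s) ^ 2) / (β s * (1 + (τ s) ^ 2))) s := by
  intro s hs
  obtain ⟨hb, hC, hα, hβ, hl, hν⟩ := h s hs
  have hτf : τ = fun u => (ν u - α u) / β u := funext hτ
  have hb2 : 0 < (β s) ^ 2 := by positivity
  have hna : ν s - α s ≠ 0 := by
    intro h0
    rw [h0, zero_mul] at hC
    exact absurd hC.symm (by positivity)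
  have hq : ν s - l s ≠ 0 := by
    intro h0
    rw [h0, mul_zero] at hC
    exact absurd hC.symm (by positivity)
  have ht : (ν s - α s) / β s ≠ 0 := div_ne_zero hna hb
  set d := deriv ν s with hd'
  have hνd : HasDerivAt ν d s := hν.hasDerivAt
  -- derivative of the constraint function
  have hF : HasDerivAt (fun u => (ν u - α u) * (ν u - l u) - (β u) ^ 2)
      ((d - β s * (α s + l s - 3 * ν s)) * (ν s - l s)
        + (ν s - α s) * (d - ((l s - ν s) * ((l s) ^ 2 - α s * l s - c) / β s
            + β s * (2 * l s + ν s)))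
        - 2 * β s * ((β s) ^ 2 + (l s) ^ 2 + ν s * (α s - 2 * l s) + c)) s := by
    have h1 : HasDerivAt (fun u => (ν u - α u) * (ν u - l u) - (β u) ^ 2) _ s :=
      ((hνd.sub hα).mul (hνd.sub hl)).sub (hβ.pow 2)
    convert h1 using 1
    simp only [Pi.sub_apply]
    ring
  have hF0 : HasDerivAt (fun u => (ν u - α u) * (ν u - l u) - (β u) ^ 2) 0 s := by
    have heq : (fun u => (ν u - α u) * (ν u - l u) - (β u) ^ 2) =ᶠ[nhds s]
        (fun _ => (0 : ℝ)) := by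
      filter_upwards [hI.mem_nhds hs] with u hu
      simp [(h u hu).2.1]
    exact (hasDerivAt_const s (0 : ℝ)).congr_of_eventuallyEq heq
  have E : (d - β s * (α s + l s - 3 * ν s)) * (ν s - l s)
        + (ν s - α s) * (d - ((l s - ν s) * ((l s) ^ 2 - α s * l s - c) / β s
            + β s * (2 * l s + ν s)))
        - 2 * β s * ((β s) ^ 2 + (l s) ^ 2 + ν s * (α s - 2 * l s) + c) = 0 :=
    hF.unique hF0
  -- quotient rule for τ
  have hQ : HasDerivAt τ
      (((d - β s * (α s + l s - 3 * ν s)) * β s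
        - (ν s - α s) * ((β s) ^ 2 + (l s) ^ 2 + ν s * (α s - 2 * l s) + c))
        / (β s) ^ 2) s := by
    rw [hτf]
    exact (hνd.sub hα).div hβ hb
  convert hQ using 1
  rw [hτ]
  refine stmt9_key' ((ν s - α s) / β s) (ν s - l s) (α s) (β s) (l s) (ν s) c d hq ht ?_ ?_ ?_ E
  · field_simp
    linear_combination -hC
  · field_simp
    linear_combination (ν s - α s) * hC
  · ring
end
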